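/- Fix an integer t ≥ 1 and let R_t(r) := Σ_{i=0}^t r^i/i!. Then the function r ↦ r·R_t'(r)/R_t(r) is strictly increasing on (0,∞); for each y ∈ (0,t) there is a unique positive solution r_0 = r_0(y) of r·R_t'(r)/R_t(r) = y; the map y ↦ r_0(y) is a continuous bijection from (0,t) onto (0,∞); and s(y) := r_0(y) · (d/dx)[x·R_t'(x)/R_t(x)] evaluated at x = r_0(y) satisfies s(y) > 0 for every y ∈ (0,t). -/

import Mathlib

open Filter Asymptotics Set

/-- `R_t(r) = Σ_{i=0}^t r^i / i!`. -/
noncomputable def Rt (t : ℕ) (r : ℝ) : ℝ :=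
  ∑ i ∈ Finset.range (t + 1), r ^ i / (i.factorial : ℝ)

/-- `F_t(r) = r · R_t'(r) / R_t(r)`. -/
noncomputable def Ft (t : ℕ) (r : ℝ) : ℝ := r * deriv (Rt t) r / Rt t r

-- derivative
lemma hasDerivAt_Rt (n : ℕ) (r : ℝ) :
    HasDerivAt (Rt n) (∑ i ∈ Finset.range n, r ^ i / (i.factorial : ℝ)) r := by
  have h : ∀ i ∈ Finset.range (n+1), HasDerivAt (fun x : ℝ => x ^ i / (i.factorial : ℝ))
      ((i : ℝ) * r ^ (i - 1) / (i.factorial : ℝ)) r := by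
    intro i _
    simpa [div_eq_mul_inv] using ((hasDerivAt_pow i r).div_const (i.factorial : ℝ))
  have := HasDerivAt.fun_sum h
  refine this.congr_deriv (Eq.symm ?_)
  rw [Finset.sum_range_succ']
  simp only [Nat.cast_zero, zero_mul, zero_div, add_zero]
  apply Finset.sum_congr rfl
  intro i _
  rw [Nat.factorial_succ]
  push_cast
  have : ((i:ℝ)+1) ≠ 0 := by positivity
  field_simp

lemma Rt_pos (n : ℕ) {r : ℝ} (hr : 0 ≤ r) : 0 < Rt n r := by
  unfold Rt
  apply Finset.sum_pos' (fun i _ => by positivity)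
  exact ⟨0, Finset.mem_range.2 (Nat.succ_pos n), by norm_num⟩

lemma sum_S1 (n : ℕ) (r : ℝ) :
    ∑ i ∈ Finset.range (n+1), (i : ℝ) * (r ^ i / (i.factorial : ℝ))
      = r * ∑ i ∈ Finset.range n, r ^ i / (i.factorial : ℝ) := by
  rw [Finset.sum_range_succ', Finset.mul_sum]
  simp only [Nat.cast_zero, zero_mul, pow_zero, add_zero]
  apply Finset.sum_congr rfl
  intro i _
  rw [Nat.factorial_succ]
  push_cast
  have : ((i:ℝ)+1) ≠ 0 := by positivity
  have h2 : (i.factorial : ℝ) ≠ 0 := by positivity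
  field_simp
  ring

lemma sum_S2 (n : ℕ) (r : ℝ) :
    ∑ i ∈ Finset.range (n+2), (i : ℝ) * ((i:ℝ) - 1) * (r ^ i / (i.factorial : ℝ))
      = r^2 * ∑ i ∈ Finset.range n, r ^ i / (i.factorial : ℝ) := by
  rw [Finset.sum_range_succ', Finset.sum_range_succ', Finset.mul_sum]
  simp only [Nat.cast_zero, zero_mul, pow_zero, add_zero, Nat.cast_one,
    Nat.cast_add, one_mul, sub_self, mul_zero, zero_add]
  apply Finset.sum_congr rfl
  intro i _
  rw [Nat.factorial_succ, Nat.factorial_succ]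
  push_cast
  have h1 : ((i:ℝ)+1) ≠ 0 := by positivity
  have h1' : ((i:ℝ)+1+1) ≠ 0 := by positivity
  have h2 : (i.factorial : ℝ) ≠ 0 := by positivity
  field_simp
  ring

-- Cauchy–Schwarz-type strict inequality
lemma key_ineq (n : ℕ) {r : ℝ} (hr : 0 < r) :
    (∑ i ∈ Finset.range (n+2), (i:ℝ) * (i:ℝ) * (r ^ i / (i.factorial : ℝ)))
      * (∑ i ∈ Finset.range (n+2), r ^ i / (i.factorial : ℝ))
      - (∑ i ∈ Finset.range (n+2), (i:ℝ) * (r ^ i / (i.factorial : ℝ)))^2 > 0 := by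
  set T := Finset.range (n+2) with hT
  set a : ℕ → ℝ := fun i => r ^ i / (i.factorial : ℝ) with ha
  set A := ∑ i ∈ T, a i with hA
  set B := ∑ i ∈ T, (i:ℝ) * a i with hB
  set C := ∑ i ∈ T, (i:ℝ) * (i:ℝ) * a i with hC
  have row : ∀ i : ℕ, ∑ j ∈ T, ((i:ℝ)-(j:ℝ))^2*(a i*a j)
      = ((i:ℝ)*(i:ℝ)*a i)*A - (2*((i:ℝ)*a i))*B + (a i)*C := by
    intro i
    rw [hA, hB, hC, Finset.mul_sum, Finset.mul_sum, Finset.mul_sum,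
      ← Finset.sum_sub_distrib, ← Finset.sum_add_distrib]
    exact Finset.sum_congr rfl fun j _ => by ring
  have expand : ∑ p ∈ T ×ˢ T, ((p.1:ℝ)-(p.2:ℝ))^2*(a p.1 * a p.2)
      = C*A - 2*(B*B) + A*C := by
    rw [Finset.sum_product]
    rw [Finset.sum_congr rfl (fun i _ => row i)]
    rw [Finset.sum_add_distrib, Finset.sum_sub_distrib, ← Finset.sum_mul,
      ← Finset.sum_mul, ← Finset.sum_mul,
      show (∑ i ∈ T, 2*((i:ℝ)*a i)) = 2*B by rw [hB, Finset.mul_sum],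
      ← hA, ← hC]
    ring
  have hanonneg : ∀ i, 0 ≤ a i := fun i => by
    rw [ha]; positivity
  have mem01 : ((0:ℕ),(1:ℕ)) ∈ T ×ˢ T := by
    rw [Finset.mem_product, hT]
    constructor <;> simp <;> omega
  have hsum : r ≤ ∑ p ∈ T ×ˢ T, ((p.1:ℝ)-(p.2:ℝ))^2*(a p.1 * a p.2) := by
    have := Finset.single_le_sum
      (f := fun p : ℕ × ℕ => ((p.1:ℝ)-(p.2:ℝ))^2*(a p.1 * a p.2))
      (fun p _ => by have h1 := hanonneg p.1; have h2 := hanonneg p.2; positivity)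
      mem01
    simpa [ha] using this
  have : C*A - B^2 = (1/2) * (C*A - 2*(B*B) + A*C) := by ring
  rw [this, ← expand]
  linarith

lemma Ft_eq (s : ℕ) : Ft (s+1) = fun r => r * Rt s r / Rt (s+1) r := by
  funext r
  have h := (hasDerivAt_Rt (s+1) r).deriv
  unfold Ft
  rw [h]
  rfl

lemma hasDerivAt_Ft (s : ℕ) {r : ℝ} (hP : Rt (s+1) r ≠ 0) :
    HasDerivAt (Ft (s+1))
      (((Rt s r + r * ∑ i ∈ Finset.range s, r ^ i / (i.factorial : ℝ)) * Rt (s+1) r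
        - r * Rt s r * Rt s r) / (Rt (s+1) r)^2) r := by
  rw [Ft_eq]
  have hu : HasDerivAt (fun x : ℝ => x * Rt s x)
      (Rt s r + r * ∑ i ∈ Finset.range s, r ^ i / (i.factorial : ℝ)) r := by
    simpa using (hasDerivAt_id r).fun_mul (hasDerivAt_Rt s r)
  have := hu.div (hasDerivAt_Rt (s+1) r) hP
  exact this

lemma N_pos (s : ℕ) {r : ℝ} (hr : 0 < r) :
    0 < (Rt s r + r * ∑ i ∈ Finset.range s, r ^ i / (i.factorial : ℝ)) * Rt (s+1) r
        - r * Rt s r * Rt s r := by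
  have hS1 : (∑ i ∈ Finset.range (s+2), (i : ℝ) * (r ^ i / (i.factorial : ℝ)))
      = r * Rt s r := sum_S1 (s+1) r
  have hS2 := sum_S2 s r
  have hsq : (∑ i ∈ Finset.range (s+2), (i:ℝ) * (i:ℝ) * (r ^ i / (i.factorial : ℝ)))
      = r^2 * (∑ i ∈ Finset.range s, r ^ i / (i.factorial : ℝ)) + r * Rt s r := by
    rw [← hS2, ← hS1, ← Finset.sum_add_distrib]
    exact Finset.sum_congr rfl fun i _ => by ring
  have key := key_ineq s hr
  rw [hsq, hS1] at key
  have hP : (∑ i ∈ Finset.range (s+2), r ^ i / (i.factorial : ℝ)) = Rt (s+1) r := rfl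
  rw [hP] at key
  nlinarith [key, hr]

lemma deriv_Ft (s : ℕ) {r : ℝ} (hP : Rt (s+1) r ≠ 0) :
    deriv (Ft (s+1)) r
      = ((Rt s r + r * ∑ i ∈ Finset.range s, r ^ i / (i.factorial : ℝ)) * Rt (s+1) r
        - r * Rt s r * Rt s r) / (Rt (s+1) r)^2 :=
  (hasDerivAt_Ft s hP).deriv

lemma deriv_Ft_pos (s : ℕ) {r : ℝ} (hr : 0 < r) : 0 < deriv (Ft (s+1)) r := by
  rw [deriv_Ft s (ne_of_gt (Rt_pos (s+1) hr.le))]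
  have h1 := N_pos s hr
  have h2 := Rt_pos (s+1) hr.le
  positivity

lemma strictMonoOn_Ft (s : ℕ) : StrictMonoOn (Ft (s+1)) (Set.Ioi 0) := by
  apply strictMonoOn_of_deriv_pos (convex_Ioi 0)
  · intro x hx
    exact ((hasDerivAt_Ft s (ne_of_gt (Rt_pos (s+1) (le_of_lt hx)))).continuousAt).continuousWithinAt
  · intro x hx
    rw [interior_Ioi] at hx
    exact deriv_Ft_pos s hx

lemma Ft_pos (s : ℕ) {r : ℝ} (hr : 0 < r) : 0 < Ft (s+1) r := by
  rw [Ft_eq]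
  exact div_pos (mul_pos hr (Rt_pos s hr.le)) (Rt_pos (s+1) hr.le)

lemma tsub_sum (s : ℕ) (r : ℝ) :
    ((s:ℝ)+1) * Rt (s+1) r - r * Rt s r
      = ∑ i ∈ Finset.range (s+2), (((s:ℝ)+1) - (i:ℝ)) * (r ^ i / (i.factorial : ℝ)) := by
  have hS1 : (∑ i ∈ Finset.range (s+2), (i : ℝ) * (r ^ i / (i.factorial : ℝ)))
      = r * Rt s r := sum_S1 (s+1) r
  rw [← hS1]
  have hP : Rt (s+1) r = ∑ i ∈ Finset.range (s+2), r ^ i / (i.factorial : ℝ) := rfl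
  rw [hP, Finset.mul_sum, ← Finset.sum_sub_distrib]
  exact Finset.sum_congr rfl fun i _ => by ring

lemma Ft_lt (s : ℕ) {r : ℝ} (hr : 0 < r) : Ft (s+1) r < (s:ℝ)+1 := by
  rw [Ft_eq]
  rw [div_lt_iff₀ (Rt_pos (s+1) hr.le)]
  have h := tsub_sum s r
  have hpos : 0 < ∑ i ∈ Finset.range (s+2), (((s:ℝ)+1) - (i:ℝ)) * (r ^ i / (i.factorial : ℝ)) := by
    apply Finset.sum_pos'
    · intro i hi
      have : (i:ℝ) ≤ (s:ℝ)+1 := by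
        have := Finset.mem_range.1 hi
        push_cast
        exact_mod_cast Nat.lt_succ_iff.1 this
      have h2 : (0:ℝ) ≤ r ^ i / (i.factorial : ℝ) := by positivity
      nlinarith
    · refine ⟨0, Finset.mem_range.2 (by omega), ?_⟩
      simp
      positivity
  linarith

lemma exists_Ft_gt (s : ℕ) {y : ℝ} (hy : y < (s:ℝ)+1) : ∃ b, 0 < b ∧ y < Ft (s+1) b := by
  set C : ℝ := ((s:ℝ)+1)^2 * ((s+1).factorial : ℝ) with hC
  have hCpos : 0 < C := by positivity
  set b : ℝ := max 1 (C/(((s:ℝ)+1)-y) + 1) with hb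
  have hb1 : 1 ≤ b := le_max_left _ _
  have hbpos : 0 < b := lt_of_lt_of_le one_pos hb1
  refine ⟨b, hbpos, ?_⟩
  -- bound: ((s+1) - Ft b) ≤ C / b
  have hnum : ((s:ℝ)+1) * Rt (s+1) b - b * Rt s b ≤ ((s:ℝ)+1)^2 * b^s := by
    rw [tsub_sum s b, Finset.sum_range_succ]
    have hlast : (((s:ℝ)+1) - ((s+1:ℕ):ℝ)) * (b ^ (s+1) / ((s+1).factorial : ℝ)) = 0 := by
      push_cast; ring
    rw [hlast, add_zero]
    calc ∑ i ∈ Finset.range (s+1), (((s:ℝ)+1) - (i:ℝ)) * (b ^ i / (i.factorial : ℝ))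
        ≤ ∑ i ∈ Finset.range (s+1), ((s:ℝ)+1) * b^s := by
          apply Finset.sum_le_sum
          intro i hi
          have hi' : i ≤ s := Nat.lt_succ_iff.1 (Finset.mem_range.1 hi)
          have h1 : ((s:ℝ)+1) - (i:ℝ) ≤ (s:ℝ)+1 := by
            have : (0:ℝ) ≤ (i:ℝ) := Nat.cast_nonneg i
            linarith
          have h2 : b ^ i / (i.factorial : ℝ) ≤ b^s := by
            have hfac : (1:ℝ) ≤ (i.factorial : ℝ) := by exact_mod_cast Nat.one_le_iff_ne_zero.2 (Nat.factorial_ne_zero i)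
            have hpow : b ^ i ≤ b ^ s := pow_le_pow_right₀ hb1 hi'
            calc b ^ i / (i.factorial : ℝ) ≤ b ^ i / 1 := by
                  apply div_le_div_of_nonneg_left _ one_pos hfac <;> positivity
              _ = b ^ i := div_one _
              _ ≤ b ^ s := hpow
          have h3 : (0:ℝ) ≤ b ^ i / (i.factorial : ℝ) := by positivity
          have h4 : (0:ℝ) ≤ (s:ℝ)+1 - i := by
            push_cast; have : (i:ℝ) ≤ (s:ℝ) := by exact_mod_cast hi'
            linarith
          nlinarith
      _ = ((s:ℝ)+1)^2 * b^s := by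
          rw [Finset.sum_const, Finset.card_range]
          push_cast; ring
  have hPlow : b^(s+1) / (((s+1).factorial : ℝ)) ≤ Rt (s+1) b := by
    apply Finset.single_le_sum (f := fun i => b ^ i / (i.factorial : ℝ))
      (fun i _ => by positivity) (Finset.mem_range.2 (by omega))
  have hPpos : 0 < Rt (s+1) b := Rt_pos (s+1) hbpos.le
  have hbound : ((s:ℝ)+1) - Ft (s+1) b ≤ C / b := by
    rw [Ft_eq]
    have e1 : ((s:ℝ)+1) - b * Rt s b / Rt (s+1) b
        = (((s:ℝ)+1) * Rt (s+1) b - b * Rt s b) / Rt (s+1) b := by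
      field_simp
    rw [e1]
    calc (((s:ℝ)+1) * Rt (s+1) b - b * Rt s b) / Rt (s+1) b
        ≤ (((s:ℝ)+1)^2 * b^s) / (b^(s+1) / ((s+1).factorial : ℝ)) := by
          apply div_le_div₀ (by positivity) hnum (by positivity) hPlow
      _ = C / b := by
          rw [hC, pow_succ]
          have hbne : b ≠ 0 := ne_of_gt hbpos
          have hfne : ((s+1).factorial : ℝ) ≠ 0 := by positivity
          field_simp
          ring
  have hfrac : C / b < ((s:ℝ)+1) - y := by
    rw [div_lt_iff₀ hbpos]
    have h2 : C/(((s:ℝ)+1)-y) + 1 ≤ b := le_max_right _ _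
    have h3 : 0 < ((s:ℝ)+1) - y := by linarith
    have h4 : C = (C/(((s:ℝ)+1)-y)) * (((s:ℝ)+1)-y) := by field_simp
    nlinarith
  linarith

lemma exists_Ft_eq (s : ℕ) {y : ℝ} (hy0 : 0 < y) (hyt : y < (s:ℝ)+1) :
    ∃ r, 0 < r ∧ Ft (s+1) r = y := by
  -- small a with Ft a < y
  have hcont0 : ContinuousAt (Ft (s+1)) 0 := by
    rw [Ft_eq]
    exact (continuousAt_id.mul (hasDerivAt_Rt s 0).continuousAt).div
      (hasDerivAt_Rt (s+1) 0).continuousAt (ne_of_gt (Rt_pos (s+1) le_rfl))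
  have hF0 : Ft (s+1) 0 = 0 := by rw [Ft_eq]; simp
  have htend : Filter.Tendsto (Ft (s+1)) (nhdsWithin 0 (Set.Ioi 0)) (nhds 0) := by
    have h := hcont0.continuousWithinAt (s := Set.Ioi 0)
    unfold ContinuousWithinAt at h
    rwa [hF0] at h
  have hev : ∀ᶠ a in nhdsWithin 0 (Set.Ioi 0), Ft (s+1) a < y ∧ a ∈ Set.Ioi (0:ℝ) :=
    (htend.eventually (Filter.Tendsto.eventually_lt_const hy0 Filter.tendsto_id)).and
      self_mem_nhdsWithin
  obtain ⟨a, haF, ha0⟩ := hev.exists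
  obtain ⟨b, hb0, hbF⟩ := exists_Ft_gt s hyt
  have hab : a < b := by
    by_contra h
    push_neg at h
    have := (strictMonoOn_Ft s).monotoneOn hb0 ha0 h
    linarith
  have hconts : ContinuousOn (Ft (s+1)) (Set.Icc a b) := by
    intro x hx
    have hx0 : 0 < x := lt_of_lt_of_le ha0 hx.1
    exact ((hasDerivAt_Ft s (ne_of_gt (Rt_pos (s+1) hx0.le))).continuousAt).continuousWithinAt
  have := intermediate_value_Icc hab.le hconts
  have hy : y ∈ Set.Icc (Ft (s+1) a) (Ft (s+1) b) := ⟨haF.le, hbF.le⟩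
  obtain ⟨r, hrmem, hrF⟩ := this hy
  exact ⟨r, lt_of_lt_of_le ha0 hrmem.1, hrF⟩

theorem stmt4 (t : ℕ) (ht : 1 ≤ t) :
    StrictMonoOn (Ft t) (Set.Ioi 0) ∧
    ∃ r0 : ℝ → ℝ,
      (∀ y ∈ Set.Ioo (0 : ℝ) t,
        r0 y ∈ Set.Ioi (0 : ℝ) ∧ Ft t (r0 y) = y ∧
          ∀ r ∈ Set.Ioi (0 : ℝ), Ft t r = y → r = r0 y) ∧
      ContinuousOn r0 (Set.Ioo (0 : ℝ) t) ∧
      Set.BijOn r0 (Set.Ioo (0 : ℝ) t) (Set.Ioi 0) ∧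
      ∀ y ∈ Set.Ioo (0 : ℝ) t, 0 < r0 y * deriv (Ft t) (r0 y) := by
  classical
  obtain ⟨s, rfl⟩ : ∃ s, t = s + 1 := ⟨t - 1, (Nat.succ_pred_eq_of_pos ht).symm⟩
  have hcast : ((s+1 : ℕ) : ℝ) = (s:ℝ)+1 := by push_cast; ring
  have hmono := strictMonoOn_Ft s
  have hex : ∀ y ∈ Set.Ioo (0:ℝ) ((s+1:ℕ):ℝ), ∃ r, r ∈ Set.Ioi (0:ℝ) ∧ Ft (s+1) r = y := by
    intro y hy
    obtain ⟨r, hr, hf⟩ := exists_Ft_eq s hy.1 (by rw [hcast] at hy; exact hy.2)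
    exact ⟨r, hr, hf⟩
  set r0 : ℝ → ℝ := fun y =>
    if h : ∃ r, r ∈ Set.Ioi (0:ℝ) ∧ Ft (s+1) r = y then h.choose else 1 with hr0
  have hspec : ∀ y ∈ Set.Ioo (0:ℝ) ((s+1:ℕ):ℝ),
      r0 y ∈ Set.Ioi (0:ℝ) ∧ Ft (s+1) (r0 y) = y := by
    intro y hy
    have h := hex y hy
    simp only [hr0, dif_pos h]
    exact h.choose_spec
  have hFtmem : ∀ r ∈ Set.Ioi (0:ℝ), Ft (s+1) r ∈ Set.Ioo (0:ℝ) ((s+1:ℕ):ℝ) := by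
    intro r hr
    exact ⟨Ft_pos s hr, by rw [hcast]; exact Ft_lt s hr⟩
  have huniq : ∀ y ∈ Set.Ioo (0:ℝ) ((s+1:ℕ):ℝ),
      ∀ r ∈ Set.Ioi (0:ℝ), Ft (s+1) r = y → r = r0 y := by
    intro y hy r hr hf
    exact hmono.injOn hr (hspec y hy).1 (by rw [hf, (hspec y hy).2])
  have hr0Ft : ∀ r ∈ Set.Ioi (0:ℝ), r0 (Ft (s+1) r) = r := by
    intro r hr
    exact (huniq _ (hFtmem r hr) r hr rfl).symm
  have hr0mono : StrictMonoOn r0 (Set.Ioo (0:ℝ) ((s+1:ℕ):ℝ)) := by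
    intro y hy y' hy' hlt
    by_contra h
    push_neg at h
    have := hmono.monotoneOn (hspec y' hy').1 (hspec y hy).1 h
    rw [(hspec y' hy').2, (hspec y hy).2] at this
    linarith
  have himage : r0 '' Set.Ioo (0:ℝ) ((s+1:ℕ):ℝ) = Set.Ioi 0 := by
    apply Set.Subset.antisymm
    · rintro _ ⟨y, hy, rfl⟩
      exact (hspec y hy).1
    · intro r hr
      exact ⟨Ft (s+1) r, hFtmem r hr, hr0Ft r hr⟩
  refine ⟨hmono, r0, ?_, ?_, ?_, ?_⟩
  · intro y hy
    exact ⟨(hspec y hy).1, (hspec y hy).2, huniq y hy⟩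
  · intro y hy
    apply ContinuousAt.continuousWithinAt
    apply hr0mono.continuousAt_of_image_mem_nhds (isOpen_Ioo.mem_nhds hy)
    rw [himage]
    exact isOpen_Ioi.mem_nhds (hspec y hy).1
  · refine ⟨fun y hy => (hspec y hy).1, ?_, ?_⟩
    · intro y hy y' hy' h
      have := (hspec y hy).2
      rw [h, (hspec y' hy').2] at this
      exact this.symm
    · intro r hr
      exact ⟨Ft (s+1) r, hFtmem r hr, hr0Ft r hr⟩
  · intro y hy
    exact mul_pos (hspec y hy).1 (deriv_Ft_pos s (hspec y hy).1)
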